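/- Let b* minimize ‖Xb‖₂² over {b : ‖b_S‖₁ − ‖b_{−S}‖₁ = 1} and suppose this minimum is strictly positive. Then X^T X b* = z* ‖Xb*‖₂², where z* ∈ ℝ^p satisfies: z*_j = sign(b*_j) for j ∈ S, and z*_{−S} belongs to −∂‖b*_{−S}‖₁, i.e. ‖z*_{−S}‖_∞ ≤ 1 and z*_{−S}^T b*_{−S} = −‖b*_{−S}‖₁. -/

import Mathlib

open Finset

noncomputable def l1 {p : ℕ} (b : Fin p → ℝ) : ℝ := ∑ j, |b j|

def restr {p : ℕ} (S : Finset (Fin p)) (b : Fin p → ℝ) : Fin p → ℝ :=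
  fun j => if j ∈ S then b j else 0

noncomputable def qf {n p : ℕ} (X : Matrix (Fin n) (Fin p) ℝ) (b : Fin p → ℝ) : ℝ :=
  ∑ i, (X.mulVec b i) ^ 2

/-- The compatibility constant κ̂(v,S) (square root of the minimal value). -/
noncomputable def kappaHat {n p : ℕ} (X : Matrix (Fin n) (Fin p) ℝ) (S : Finset (Fin p))
    (v : ℝ) : ℝ :=
  Real.sqrt (sInf {c : ℝ | ∃ b : Fin p → ℝ,
    l1 (restr S b) - v * l1 (restr Sᶜ b) = 1 ∧ c = (S.card : ℝ) * qf X b / n})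

lemma small_pos (a c ε : ℝ) (hε : 0 < ε) (h : ∀ t : ℝ, 0 < t → t < ε → a ≤ t * c) : a ≤ 0 := by
  by_contra h'
  push_neg at h'
  set t := min (ε/2) (a / (2*(|c|+1))) with ht
  have hc0 : 0 < |c| + 1 := by positivity
  have ht0 : 0 < t := lt_min (by linarith) (by positivity)
  have htε : t < ε := lt_of_le_of_lt (min_le_left _ _) (by linarith)
  have h1 : a ≤ t * c := h t ht0 htε
  have h2 : t * c ≤ t * |c| := mul_le_mul_of_nonneg_left (le_abs_self c) ht0.le
  have h3 : t ≤ a / (2*(|c|+1)) := min_le_right _ _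
  have h4 : t * |c| ≤ (a / (2*(|c|+1))) * |c| :=
    mul_le_mul_of_nonneg_right h3 (abs_nonneg c)
  have h5 : (a / (2*(|c|+1))) * |c| < a := by
    rw [div_mul_eq_mul_div, div_lt_iff₀ (by positivity)]
    nlinarith [abs_nonneg c]
  linarith

lemma l1_restr_eq {p : ℕ} (T : Finset (Fin p)) (b : Fin p → ℝ) :
    l1 (restr T b) = ∑ j ∈ T, |b j| := by
  unfold l1 restr
  rw [← Finset.sum_filter_add_sum_filter_not Finset.univ (· ∈ T)]
  have h1 : ∑ x ∈ Finset.univ.filter (· ∈ T), |if x ∈ T then b x else 0| = ∑ j ∈ T, |b j| := by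
    refine Finset.sum_congr (by simp [Finset.filter_mem_eq_inter]) fun x hx => ?_
    have hx : x ∈ T := hx
    simp [hx]
  have h2 : ∑ x ∈ Finset.univ.filter (· ∉ T), |if x ∈ T then b x else 0| = 0 := by
    refine Finset.sum_eq_zero fun x hx => ?_
    simp at hx
    simp [hx]
  rw [h1, h2, add_zero]

lemma l1_smul {p : ℕ} (c : ℝ) (hc : 0 ≤ c) (b : Fin p → ℝ) :
    l1 (fun k => c * b k) = c * l1 b := by
  unfold l1
  rw [Finset.mul_sum]
  exact Finset.sum_congr rfl fun _ _ => by rw [abs_mul, abs_of_nonneg hc]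

lemma restr_smul {p : ℕ} (T : Finset (Fin p)) (c : ℝ) (b : Fin p → ℝ) :
    restr T (fun k => c * b k) = fun k => c * restr T b k := by
  funext k; unfold restr; split <;> simp

lemma qf_smul {n p : ℕ} (X : Matrix (Fin n) (Fin p) ℝ) (c : ℝ) (b : Fin p → ℝ) :
    qf X (fun k => c * b k) = c^2 * qf X b := by
  unfold qf
  rw [Finset.mul_sum]
  refine Finset.sum_congr rfl fun i _ => ?_
  have : X.mulVec (fun k => c * b k) i = c * X.mulVec b i := by
    simp only [Matrix.mulVec, dotProduct, Finset.mul_sum]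
    exact Finset.sum_congr rfl fun k _ => by ring
  rw [this]; ring

lemma qf_perturb {n p : ℕ} (X : Matrix (Fin n) (Fin p) ℝ) (b : Fin p → ℝ) (j : Fin p) (t : ℝ) :
    qf X (fun k => b k + if k = j then t else 0) =
      qf X b + 2*t*(∑ i, X i j * X.mulVec b i) + t^2 * ∑ i, (X i j)^2 := by
  unfold qf
  have h : ∀ i, X.mulVec (fun k => b k + if k = j then t else 0) i
      = X.mulVec b i + t * X i j := by
    intro i
    simp only [Matrix.mulVec, dotProduct, mul_add, Finset.sum_add_distrib, mul_ite, mul_zero]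
    congr 1
    rw [Finset.sum_ite_eq' Finset.univ j (fun k => X i k * t)]
    simp [mul_comm]
  calc ∑ i, (X.mulVec (fun k => b k + if k = j then t else 0) i)^2
      = ∑ i, ((X.mulVec b i)^2 + 2*t*(X i j * X.mulVec b i) + t^2*(X i j)^2) :=
        Finset.sum_congr rfl fun i _ => by rw [h i]; ring
    _ = _ := by
        rw [Finset.sum_add_distrib, Finset.sum_add_distrib, ← Finset.mul_sum, ← Finset.mul_sum]

lemma l1_restr_perturb {p : ℕ} (T : Finset (Fin p)) (b : Fin p → ℝ) (j : Fin p) (t : ℝ) :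
    l1 (restr T (fun k => b k + if k = j then t else 0)) =
      l1 (restr T b) + (if j ∈ T then |b j + t| - |b j| else 0) := by
  unfold l1 restr
  rw [← Finset.sum_erase_add _ _ (Finset.mem_univ j), ← Finset.sum_erase_add _ _ (Finset.mem_univ j)]
  have he : ∑ k ∈ Finset.univ.erase j, |if k ∈ T then b k + (if k = j then t else 0) else 0|
      = ∑ k ∈ Finset.univ.erase j, |if k ∈ T then b k else 0| := by
    refine Finset.sum_congr rfl fun k hk => ?_
    have : k ≠ j := Finset.ne_of_mem_erase hk
    simp [this]
  rw [he]
  by_cases hj : j ∈ T <;> simp [hj] <;> ring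
theorem stmt6 {n p : ℕ} (X : Matrix (Fin n) (Fin p) ℝ) (S : Finset (Fin p))
    (bstar : Fin p → ℝ)
    (hcon : l1 (restr S bstar) - l1 (restr Sᶜ bstar) = 1)
    (hmin : ∀ b : Fin p → ℝ, l1 (restr S b) - l1 (restr Sᶜ b) = 1 →
      qf X bstar ≤ qf X b)
    (hpos : 0 < qf X bstar) :
    ∃ z : Fin p → ℝ,
      (∀ j, ((X.transpose * X).mulVec bstar) j = z j * qf X bstar) ∧
      (∀ j ∈ S, z j = Real.sign (bstar j)) ∧
      (∀ j ∉ S, |z j| ≤ 1) ∧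
      (∑ j ∈ Sᶜ, z j * bstar j) = -(l1 (restr Sᶜ bstar)) := by
  set Q := qf X bstar with hQ
  set L : Fin p → ℝ := fun j => ∑ i, X i j * X.mulVec bstar i with hL
  set C : Fin p → ℝ := fun j => ∑ i, (X i j)^2 with hC
  -- Lemma B: scaled minimality
  have hB : ∀ b : Fin p → ℝ, 0 < l1 (restr S b) - l1 (restr Sᶜ b) →
      Q * (l1 (restr S b) - l1 (restr Sᶜ b))^2 ≤ qf X b := by
    intro b hg
    set g := l1 (restr S b) - l1 (restr Sᶜ b) with hgdef
    have hc0 : (0:ℝ) ≤ g⁻¹ := inv_nonneg.mpr hg.le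
    have hfeas : l1 (restr S (fun k => g⁻¹ * b k)) - l1 (restr Sᶜ (fun k => g⁻¹ * b k)) = 1 := by
      rw [restr_smul, restr_smul, l1_smul _ hc0, l1_smul _ hc0]
      field_simp [hgdef]
      exact hgdef.symm
    have h1 := hmin _ hfeas
    rw [qf_smul] at h1
    have hg2 : (g⁻¹)^2 * g^2 = 1 := by
      field_simp
    have h2 := mul_le_mul_of_nonneg_right h1 (sq_nonneg g)
    calc Q * g^2 ≤ (g⁻¹^2 * qf X b) * g^2 := h2
      _ = qf X b * (g⁻¹^2 * g^2) := by ring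
      _ = qf X b := by rw [hg2, mul_one]
  -- key inequality per coordinate
  have key : ∀ (j : Fin p) (t : ℝ),
      0 < 1 + (if j ∈ S then (1:ℝ) else -1) * (|bstar j + t| - |bstar j|) →
      Q * (1 + (if j ∈ S then (1:ℝ) else -1) * (|bstar j + t| - |bstar j|))^2
        ≤ Q + 2*t*L j + t^2 * C j := by
    intro j t hgt
    have hg : l1 (restr S (fun k => bstar k + if k = j then t else 0))
        - l1 (restr Sᶜ (fun k => bstar k + if k = j then t else 0))
        = 1 + (if j ∈ S then (1:ℝ) else -1) * (|bstar j + t| - |bstar j|) := by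
      rw [l1_restr_perturb, l1_restr_perturb]
      by_cases hj : j ∈ S
      · simp [hj]; linarith
      · simp [hj]; linarith
    have := hB _ (by rw [hg]; exact hgt)
    rw [hg, qf_perturb] at this
    exact this
  -- per-coordinate facts
  have hSfact : ∀ j ∈ S, L j = Q * Real.sign (bstar j) := by
    intro j hj
    by_cases hb : bstar j = 0
    · exfalso
      -- Q ≤ L j and Q ≤ - L j
      have hA : Q ≤ L j := by
        have := small_pos (2*Q - 2*L j) (C j - Q) 1 one_pos ?_
        · linarith
        intro t ht ht1
        have hk := key j t (by rw [hb]; simp [hj, abs_of_pos ht]; linarith)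
        rw [hb] at hk
        simp only [hj, if_true] at hk; rw [zero_add, abs_of_pos ht, abs_zero] at hk
        nlinarith
      have hA' : Q ≤ -L j := by
        have := small_pos (2*Q + 2*L j) (C j - Q) 1 one_pos ?_
        · linarith
        intro t ht ht1
        have hk := key j (-t) ?_
        · rw [hb] at hk
          simp only [hj, if_true] at hk
          rw [zero_add, abs_neg, abs_of_pos ht, abs_zero] at hk
          nlinarith
        · rw [hb]; simp [hj, abs_of_pos ht]; linarith
      linarith
    · rcases lt_or_gt_of_ne hb with hneg | hpos'
      · -- bstar j < 0, sign = -1, show L j = -Q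
        rw [Real.sign_of_neg hneg]
        have hε : (0:ℝ) < min (-bstar j) 1 := lt_min (by linarith) one_pos
        have habs : ∀ t : ℝ, |t| < -bstar j → |bstar j + t| - |bstar j| = -t := by
          intro t ht
          rw [abs_of_neg hneg, abs_of_neg (by cases abs_lt.mp ht; linarith)]
          ring
        have h1 : 2*Q*(-1) - 2*L j ≤ 0 := by
          refine small_pos _ (C j - Q) _ hε fun t ht htε => ?_
          have hk := key j t ?_
          · rw [habs t (by rw [abs_of_pos ht]; exact lt_of_lt_of_le htε (min_le_left _ _))] at hk
            simp only [hj, if_true] at hk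
            nlinarith [lt_of_lt_of_le htε (min_le_right _ _)]
          · rw [habs t (by rw [abs_of_pos ht]; exact lt_of_lt_of_le htε (min_le_left _ _))]
            simp only [hj, if_true]
            nlinarith [lt_of_lt_of_le htε (min_le_right _ _)]
        have h2 : 2*L j - 2*Q*(-1) ≤ 0 := by
          refine small_pos _ (C j - Q) _ hε fun t ht htε => ?_
          have hk := key j (-t) ?_
          · rw [habs (-t) (by rw [abs_neg, abs_of_pos ht]; exact lt_of_lt_of_le htε (min_le_left _ _))] at hk
            simp only [hj, if_true] at hk
            nlinarith [lt_of_lt_of_le htε (min_le_right _ _)]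
          · rw [habs (-t) (by rw [abs_neg, abs_of_pos ht]; exact lt_of_lt_of_le htε (min_le_left _ _))]
            simp only [hj, if_true]
            nlinarith [lt_of_lt_of_le htε (min_le_right _ _)]
        linarith
      · rw [Real.sign_of_pos hpos']
        have hε : (0:ℝ) < min (bstar j) 1 := lt_min hpos' one_pos
        have habs : ∀ t : ℝ, |t| < bstar j → |bstar j + t| - |bstar j| = t := by
          intro t ht
          rw [abs_of_pos hpos', abs_of_pos (by cases abs_lt.mp ht; linarith)]
          ring
        have h1 : 2*Q*1 - 2*L j ≤ 0 := by
          refine small_pos _ (C j - Q) _ hε fun t ht htε => ?_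
          have hk := key j t ?_
          · rw [habs t (by rw [abs_of_pos ht]; exact lt_of_lt_of_le htε (min_le_left _ _))] at hk
            simp only [hj, if_true] at hk
            nlinarith [lt_of_lt_of_le htε (min_le_right _ _)]
          · rw [habs t (by rw [abs_of_pos ht]; exact lt_of_lt_of_le htε (min_le_left _ _))]
            simp only [hj, if_true]
            nlinarith [lt_of_lt_of_le htε (min_le_right _ _)]
        have h2 : 2*L j - 2*Q*1 ≤ 0 := by
          refine small_pos _ (C j - Q) _ hε fun t ht htε => ?_
          have hk := key j (-t) ?_
          · rw [habs (-t) (by rw [abs_neg, abs_of_pos ht]; exact lt_of_lt_of_le htε (min_le_left _ _))] at hk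
            simp only [hj, if_true] at hk
            nlinarith [lt_of_lt_of_le htε (min_le_right _ _)]
          · rw [habs (-t) (by rw [abs_neg, abs_of_pos ht]; exact lt_of_lt_of_le htε (min_le_left _ _))]
            simp only [hj, if_true]
            nlinarith [lt_of_lt_of_le htε (min_le_right _ _)]
        linarith
  have hNfact : ∀ j ∉ S, |L j| ≤ Q ∧ L j * bstar j = -(|bstar j| * Q) := by
    intro j hj
    by_cases hb : bstar j = 0
    · constructor
      · rw [abs_le]
        constructor
        · -- -Q ≤ L j
          have h2 : 2*(-L j) - 2*Q ≤ 0 := by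
            refine small_pos _ (C j - Q) 1 one_pos fun t ht htε => ?_
            have hk := key j t (by rw [hb]; simp [hj, abs_of_pos ht]; linarith)
            rw [hb] at hk
            simp only [if_neg hj, if_false] at hk
            rw [zero_add, abs_of_pos ht, abs_zero] at hk
            nlinarith
          linarith
        · have h2 : 2*L j - 2*Q ≤ 0 := by
            refine small_pos _ (C j - Q) 1 one_pos fun t ht htε => ?_
            have hk := key j (-t) (by rw [hb]; simp [hj, abs_of_pos ht]; linarith)
            rw [hb] at hk
            simp only [if_neg hj, if_false] at hk
            rw [zero_add, abs_neg, abs_of_pos ht, abs_zero] at hk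
            nlinarith
          linarith
      · rw [hb]; simp
    · have hmain : L j = -Q * (if 0 < bstar j then 1 else -1) := by
        rcases lt_or_gt_of_ne hb with hneg | hpos'
        · rw [if_neg (by linarith)]
          have hε : (0:ℝ) < min (-bstar j) 1 := lt_min (by linarith) one_pos
          have habs : ∀ t : ℝ, |t| < -bstar j → |bstar j + t| - |bstar j| = -t := by
            intro t ht
            rw [abs_of_neg hneg, abs_of_neg (by cases abs_lt.mp ht; linarith)]
            ring
          have h1 : 2*Q*1 - 2*L j ≤ 0 := by
            refine small_pos _ (C j - Q) _ hε fun t ht htε => ?_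
            have hk := key j t ?_
            · rw [habs t (by rw [abs_of_pos ht]; exact lt_of_lt_of_le htε (min_le_left _ _))] at hk
              simp only [if_neg hj] at hk
              nlinarith [lt_of_lt_of_le htε (min_le_right _ _)]
            · rw [habs t (by rw [abs_of_pos ht]; exact lt_of_lt_of_le htε (min_le_left _ _))]
              simp only [if_neg hj]
              nlinarith [lt_of_lt_of_le htε (min_le_right _ _)]
          have h2 : 2*L j - 2*Q*1 ≤ 0 := by
            refine small_pos _ (C j - Q) _ hε fun t ht htε => ?_
            have hk := key j (-t) ?_
            · rw [habs (-t) (by rw [abs_neg, abs_of_pos ht]; exact lt_of_lt_of_le htε (min_le_left _ _))] at hk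
              simp only [if_neg hj] at hk
              nlinarith [lt_of_lt_of_le htε (min_le_right _ _)]
            · rw [habs (-t) (by rw [abs_neg, abs_of_pos ht]; exact lt_of_lt_of_le htε (min_le_left _ _))]
              simp only [if_neg hj]
              nlinarith [lt_of_lt_of_le htε (min_le_right _ _)]
          linarith
        · rw [if_pos hpos']
          have hε : (0:ℝ) < min (bstar j) 1 := lt_min hpos' one_pos
          have habs : ∀ t : ℝ, |t| < bstar j → |bstar j + t| - |bstar j| = t := by
            intro t ht
            rw [abs_of_pos hpos', abs_of_pos (by cases abs_lt.mp ht; linarith)]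
            ring
          have h1 : 2*Q*(-1) - 2*L j ≤ 0 := by
            refine small_pos _ (C j - Q) _ hε fun t ht htε => ?_
            have hk := key j t ?_
            · rw [habs t (by rw [abs_of_pos ht]; exact lt_of_lt_of_le htε (min_le_left _ _))] at hk
              simp only [if_neg hj] at hk
              nlinarith [lt_of_lt_of_le htε (min_le_right _ _)]
            · rw [habs t (by rw [abs_of_pos ht]; exact lt_of_lt_of_le htε (min_le_left _ _))]
              simp only [if_neg hj]
              nlinarith [lt_of_lt_of_le htε (min_le_right _ _)]
          have h2 : 2*L j - 2*Q*(-1) ≤ 0 := by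
            refine small_pos _ (C j - Q) _ hε fun t ht htε => ?_
            have hk := key j (-t) ?_
            · rw [habs (-t) (by rw [abs_neg, abs_of_pos ht]; exact lt_of_lt_of_le htε (min_le_left _ _))] at hk
              simp only [if_neg hj] at hk
              nlinarith [lt_of_lt_of_le htε (min_le_right _ _)]
            · rw [habs (-t) (by rw [abs_neg, abs_of_pos ht]; exact lt_of_lt_of_le htε (min_le_left _ _))]
              simp only [if_neg hj]
              nlinarith [lt_of_lt_of_le htε (min_le_right _ _)]
          linarith
      constructor
      · rw [hmain]
        rw [abs_mul]
        split <;> simp [abs_of_pos hpos]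
      · rw [hmain]
        rcases lt_or_gt_of_ne hb with hneg | hpos'
        · rw [if_neg (by linarith), abs_of_neg hneg]; ring
        · rw [if_pos hpos', abs_of_pos hpos']; ring
  -- assemble
  refine ⟨fun j => L j / Q, ?_, ?_, ?_, ?_⟩
  · intro j
    have hXtX : ((X.transpose * X).mulVec bstar) j = L j := by
      rw [← Matrix.mulVec_mulVec]
      simp [Matrix.mulVec, dotProduct, Matrix.transpose_apply, hL]
    rw [hXtX]
    field_simp
  · intro j hj
    show L j / Q = Real.sign (bstar j)
    rw [hSfact j hj, mul_comm, mul_div_assoc, div_self hpos.ne', mul_one]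
  · intro j hj
    show |L j / Q| ≤ 1
    rw [abs_div, abs_of_pos hpos, div_le_one hpos]
    exact (hNfact j hj).1
  · have heq : ∑ j ∈ Sᶜ, (fun j => L j / Q) j * bstar j = ∑ j ∈ Sᶜ, -|bstar j| := by
      refine Finset.sum_congr rfl fun j hj => ?_
      rw [Finset.mem_compl] at hj
      have h := (hNfact j hj).2
      show L j / Q * bstar j = -|bstar j|
      rw [div_mul_eq_mul_div, div_eq_iff hpos.ne']
      linarith
    rw [heq, l1_restr_eq]
    exact Finset.sum_neg_distrib _
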